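/- arXiv:1411.2288 — 2 statements merged into one kernel-verified Lean document; each statement's English description precedes it below -/
import Mathlib

section
/- Let d ≥ 2, r ≥ 1, ε > 0, and let S = {γ₁, …, γ_{2r}} ⊂ SL_d(ℝ) be a symmetric set of pairwise distinct proximal matrices such that both S and the dual set S* = {γ₁*, …, γ_{2r}*} are ε-Schottky. If i ≠ j, X ∈ b(γᵢ⁺, ε) is a line in ℝ^d, and Y ∈ b((γⱼ*)⁺, ε) is a line in (ℝ^d)*, then X and the hyperplane ker Y = {v ∈ ℝ^d : θ(v) = 0 for all θ ∈ Y} together span ℝ^d; equivalently, X is not contained in ker Y. -/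
open Polynomial Filter
open scoped Classical

noncomputable section

namespace Amalgam

variable {W : Type*} [NormedAddCommGroup W] [NormedSpace ℝ W]

/-- The distance between two subspaces of a normed space: the infimum of `‖x - y‖` over
unit vectors `x ∈ X`, `y ∈ Y`.  For one-dimensional subspaces this is the metric on
projective space; for a line and a hyperplane it is the distance from the point of
projective space to the subset of projective space determined by the hyperplane. -/
def sdist (X Y : Submodule ℝ W) : ℝ :=
  sInf {r : ℝ | ∃ x ∈ X, ∃ y ∈ Y, ‖x‖ = 1 ∧ ‖y‖ = 1 ∧ r = ‖x - y‖}

/-- A point of projective space, i.e. a line through the origin. -/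
def IsLine (X : Submodule ℝ W) : Prop := Module.finrank ℝ X = 1

/-- The diameter of the projective space of `W`. -/
def projDiam (W : Type*) [NormedAddCommGroup W] [NormedSpace ℝ W] : ℝ :=
  sSup {t : ℝ | ∃ X Y : Submodule ℝ W, IsLine X ∧ IsLine Y ∧ t = sdist X Y}

variable [FiniteDimensional ℝ W]

/-- `f` is proximal: its characteristic polynomial has a unique complex root of maximal
modulus, and this root is real with multiplicity one. -/
def IsProximal (f : W →ₗ[ℝ] W) : Prop :=
  ∃ lam : ℝ,
    (Polynomial.map (algebraMap ℝ ℂ) (LinearMap.charpoly f)).roots.count (lam : ℂ) = 1 ∧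
    ∀ μ ∈ (Polynomial.map (algebraMap ℝ ℂ) (LinearMap.charpoly f)).roots,
      μ ≠ (lam : ℂ) → ‖μ‖ < |lam|

/-- The top eigenvalue of a proximal transformation (junk value `0` otherwise). -/
def topEig (f : W →ₗ[ℝ] W) : ℝ :=
  if h : IsProximal f then h.choose else 0

/-- The attracting eigenline `γ⁺` of a proximal transformation: the eigenspace of the
eigenvalue of maximal modulus. -/
def attLine (f : W →ₗ[ℝ] W) : Submodule ℝ W :=
  LinearMap.ker (f - topEig f • LinearMap.id)

/-- The repelling hyperplane `γ⁻` of a proximal transformation: the unique invariant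
complement of the attracting line. -/
def repHyp (f : W →ₗ[ℝ] W) : Submodule ℝ W :=
  if h : ∃ H : Submodule ℝ W, Submodule.map f H ≤ H ∧ IsCompl (attLine f) H
  then h.choose else ⊥

/-- `f` is `ε`-proximal: it is proximal, `dist(γ⁺, γ⁻) ≥ 2ε`, the induced action on
projective space is `ε`-Lipschitz on `B(γ⁻, ε)`, and maps `B(γ⁻, ε)` into `b(γ⁺, ε)`. -/
def IsEpsProximal (ε : ℝ) (f : W →ₗ[ℝ] W) : Prop :=
  IsProximal f ∧
  2 * ε ≤ sdist (attLine f) (repHyp f) ∧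
  (∀ X Y : Submodule ℝ W, IsLine X → IsLine Y →
      ε ≤ sdist X (repHyp f) → ε ≤ sdist Y (repHyp f) →
      sdist (X.map f) (Y.map f) ≤ ε * sdist X Y) ∧
  (∀ X : Submodule ℝ W, IsLine X → ε ≤ sdist X (repHyp f) →
      ε ≥ sdist (X.map f) (attLine f))

/-- An indexed family `f` (with `g i` playing the role of `(f i)⁻¹`) is `ε`-Schottky:
each member is `ε`-proximal and `dist((fᵢ)⁺, (fⱼ⁻¹)⁻) ≥ 6ε` for `i ≠ j`. -/
def IsSchottkyFam {ι : Type*} (ε : ℝ) (f g : ι → (W →ₗ[ℝ] W)) : Prop :=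
  (∀ i, IsEpsProximal ε (f i)) ∧
  ∀ i j, i ≠ j → 6 * ε ≤ sdist (attLine (f i)) (repHyp (g j))


abbrev E (d : ℕ) := EuclideanSpace ℝ (Fin d)
abbrev SL (d : ℕ) := Matrix.SpecialLinearGroup (Fin d) ℝ
abbrev Dual' (d : ℕ) := StrongDual ℝ (E d)

/-- The linear endomorphism of Euclidean space determined by a matrix in `SL_d(ℝ)`. -/
def toEnd {d : ℕ} (g : SL d) : E d →ₗ[ℝ] E d :=
  Matrix.toEuclideanLin (g : Matrix (Fin d) (Fin d) ℝ)

/-- The same map as a continuous linear map. -/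
def toCLM {d : ℕ} (g : SL d) : E d →L[ℝ] E d :=
  LinearMap.toContinuousLinearMap (toEnd g)

/-- The dual transformation `γ* : θ ↦ θ ∘ γ⁻¹` acting on the dual space `(ℝ^d)*`
(equipped with the dual norm). -/
def dualEnd {d : ℕ} (g : SL d) : Dual' d →ₗ[ℝ] Dual' d where
  toFun θ := θ.comp (toCLM g⁻¹)
  map_add' θ₁ θ₂ := by ext v; simp
  map_smul' c θ := by ext v; simp

/-- The kernel of a set of functionals: `{v : φ(v) = 0 for all φ ∈ Y}`. -/
def dualKer {d : ℕ} (Y : Submodule ℝ (Dual' d)) : Submodule ℝ (E d) where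
  carrier := {v | ∀ φ ∈ Y, φ v = 0}
  add_mem' := by
    intro a b ha hb φ hφ
    simp [map_add, ha φ hφ, hb φ hφ]
  zero_mem' := by intro φ hφ; simp
  smul_mem' := by
    intro c a ha φ hφ
    simp [ha φ hφ]

/-- The annihilator of a subspace inside the dual space. -/
def annih {d : ℕ} (U : Submodule ℝ (E d)) : Submodule ℝ (Dual' d) where
  carrier := {φ | ∀ v ∈ U, φ v = 0}
  add_mem' := by
    intro a b ha hb v hv
    simp [ha v hv, hb v hv]
  zero_mem' := by intro v hv; simp
  smul_mem' := by
    intro c a ha v hv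
    simp [ha v hv]

/-- The operator norm of `g ∈ SL_d(ℝ)` (with respect to the Euclidean norm). -/
def opN {d : ℕ} (g : SL d) : ℝ := ‖toCLM g‖

/-- The second compound matrix of a `d × d` matrix: the matrix of `2 × 2` minors,
indexed by increasingly ordered pairs. -/
def compound2 {d : ℕ} (g : Matrix (Fin d) (Fin d) ℝ) :
    Matrix {p : Fin d × Fin d // p.1 < p.2} {p : Fin d × Fin d // p.1 < p.2} ℝ :=
  fun p q => g p.1.1 q.1.1 * g p.1.2 q.1.2 - g p.1.1 q.1.2 * g p.1.2 q.1.1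

/-- The operator norm of the second compound matrix (Euclidean norms). -/
def c2norm {d : ℕ} (g : Matrix (Fin d) (Fin d) ℝ) : ℝ :=
  ‖LinearMap.toContinuousLinearMap (Matrix.toEuclideanLin (compound2 g))‖


/-- A reduced word in the set `S`: a nonempty finite sequence of elements of `S` in which
no letter is followed by its inverse. -/
def IsReducedWord {d : ℕ} (S : Set (SL d)) (w : List (SL d)) : Prop :=
  w ≠ [] ∧ (∀ a ∈ w, a ∈ S) ∧ List.Chain' (fun a b => b ≠ a⁻¹) w

/-- An infinite reduced word in the set `S`. -/
def IsInfReducedWord {d : ℕ} (S : Set (SL d)) (x : ℕ → SL d) : Prop :=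
  (∀ i, x i ∈ S) ∧ ∀ i, x (i + 1) ≠ (x i)⁻¹

/-- The partial product `x₀ x₁ ⋯ x_n` of an infinite word. -/
def wordProd {d : ℕ} (x : ℕ → SL d) (n : ℕ) : SL d :=
  ((List.range (n + 1)).map x).prod

/-- A family of matrices is symmetric if it is closed under inverses. -/
def SymmFam {ι : Type*} {d : ℕ} (γ : ι → SL d) : Prop :=
  ∀ i, ∃ j, γ j = (γ i)⁻¹

/-- The family `γ` is `ε`-Schottky as acting on `ℙ(ℝ^d)`. -/
def PrimalSchottky {ι : Type*} {d : ℕ} (ε : ℝ) (γ : ι → SL d) : Prop :=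
  IsSchottkyFam ε (fun i => toEnd (γ i)) (fun i => toEnd ((γ i)⁻¹))

/-- The dual family `γ*` is `ε`-Schottky as acting on `ℙ((ℝ^d)*)`. -/
def DualSchottky {ι : Type*} {d : ℕ} (ε : ℝ) (γ : ι → SL d) : Prop :=
  IsSchottkyFam ε (fun i => dualEnd (γ i)) (fun i => dualEnd ((γ i)⁻¹))

/-- `g` is biproximal: both `g` and `g⁻¹` are proximal. -/
def IsBiproximal {d : ℕ} (g : SL d) : Prop :=
  IsProximal (toEnd g) ∧ IsProximal (toEnd g⁻¹)

/-- A symmetric family of pairwise distinct biproximal matrices is well-positioned if the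
attracting lines are pairwise distinct and `γᵢ⁺ ⊄ γⱼ⁻` whenever `γⱼ ≠ γᵢ⁻¹`. -/
def WellPositioned {ι : Type*} {d : ℕ} (γ : ι → SL d) : Prop :=
  (∀ i, IsBiproximal (γ i)) ∧
  (∀ i j, i ≠ j → attLine (toEnd (γ i)) ≠ attLine (toEnd (γ j))) ∧
  (∀ i j, γ j ≠ (γ i)⁻¹ → ¬ attLine (toEnd (γ i)) ≤ repHyp (toEnd (γ j)))

/-- The spectral radius: maximal modulus of the complex roots of the characteristic
polynomial. -/
def specRad {W : Type*} [NormedAddCommGroup W] [NormedSpace ℝ W] [FiniteDimensional ℝ W]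
    (f : W →ₗ[ℝ] W) : ℝ :=
  sSup {t : ℝ | ∃ μ ∈ (Polynomial.map (algebraMap ℝ ℂ) (LinearMap.charpoly f)).roots,
      t = ‖μ‖}

/-! ### Auxiliary lemmas -/

section SdistAux

lemma mem_nonneg_of_sdistSet {X Y : Submodule ℝ W} {r : ℝ}
    (hr : r ∈ {r : ℝ | ∃ x ∈ X, ∃ y ∈ Y, ‖x‖ = 1 ∧ ‖y‖ = 1 ∧ r = ‖x - y‖}) : 0 ≤ r := by
  obtain ⟨x, _, y, _, _, _, rfl⟩ := hr
  exact norm_nonneg _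

lemma sdist_le_norm {X Y : Submodule ℝ W} {x y : W} (hx : x ∈ X) (hy : y ∈ Y)
    (hx1 : ‖x‖ = 1) (hy1 : ‖y‖ = 1) : sdist X Y ≤ ‖x - y‖ :=
  csInf_le ⟨0, fun _ hr => mem_nonneg_of_sdistSet hr⟩ ⟨x, hx, y, hy, hx1, hy1, rfl⟩

lemma sdistSet_nonempty_of_pos {X Y : Submodule ℝ W} (h : 0 < sdist X Y) :
    {r : ℝ | ∃ x ∈ X, ∃ y ∈ Y, ‖x‖ = 1 ∧ ‖y‖ = 1 ∧ r = ‖x - y‖}.Nonempty := by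
  by_contra hne
  rw [Set.not_nonempty_iff_eq_empty] at hne
  rw [sdist, hne, Real.sInf_empty] at h
  exact lt_irrefl 0 h

lemma exists_near_of_sdist_le {X Y : Submodule ℝ W} {c δ : ℝ} (h : sdist X Y ≤ c)
    (hne : {r : ℝ | ∃ x ∈ X, ∃ y ∈ Y, ‖x‖ = 1 ∧ ‖y‖ = 1 ∧ r = ‖x - y‖}.Nonempty)
    (hδ : 0 < δ) :
    ∃ x ∈ X, ∃ y ∈ Y, ‖x‖ = 1 ∧ ‖y‖ = 1 ∧ ‖x - y‖ < c + δ := by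
  obtain ⟨r, hr, hlt⟩ := Real.lt_sInf_add_pos hne hδ
  obtain ⟨x, hx, y, hy, hx1, hy1, rfl⟩ := hr
  have h' : sInf {r : ℝ | ∃ x ∈ X, ∃ y ∈ Y, ‖x‖ = 1 ∧ ‖y‖ = 1 ∧ r = ‖x - y‖} ≤ c := h
  exact ⟨x, hx, y, hy, hx1, hy1, lt_of_lt_of_le hlt (by linarith)⟩

lemma exists_unit_of_isLine {X : Submodule ℝ W} (hX : IsLine X) : ∃ x ∈ X, ‖x‖ = 1 := by
  have hbot : X ≠ ⊥ := by
    intro h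
    rw [IsLine, h] at hX
    simp at hX
  obtain ⟨v, hv, hv0⟩ := Submodule.ne_bot_iff X |>.1 hbot
  refine ⟨‖v‖⁻¹ • v, X.smul_mem _ hv, ?_⟩
  rw [norm_smul, norm_inv, norm_norm, inv_mul_cancel₀ (norm_ne_zero_iff.2 hv0)]

end SdistAux

section CharpolyAux

lemma charpoly_transpose' {n : Type*} [DecidableEq n] [Fintype n] {R : Type*} [CommRing R]
    (M : Matrix n n R) : M.transpose.charpoly = M.charpoly := by
  have h : Matrix.charmatrix M.transpose = (Matrix.charmatrix M).transpose := by
    ext i j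
    by_cases h : i = j <;>
      simp [Matrix.charmatrix_apply, Matrix.transpose_apply, Matrix.diagonal, h, eq_comm]
  rw [Matrix.charpoly, Matrix.charpoly, h, Matrix.det_transpose]

variable {V V' : Type*} [AddCommGroup V] [Module ℝ V] [AddCommGroup V'] [Module ℝ V']
  [FiniteDimensional ℝ V] [FiniteDimensional ℝ V']

lemma charpoly_conj' (e : V ≃ₗ[ℝ] V') (f : V →ₗ[ℝ] V) :
    LinearMap.charpoly (e.conj f) = f.charpoly := by
  classical
  let b := Module.finBasis ℝ V
  have hb : LinearMap.toMatrix (b.map e) (b.map e) (e.conj f) = LinearMap.toMatrix b b f := by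
    ext i j
    simp [LinearMap.toMatrix_apply, Module.Basis.map_apply, LinearEquiv.conj_apply]
  rw [← LinearMap.charpoly_toMatrix (e.conj f) (b.map e), hb, LinearMap.charpoly_toMatrix]

lemma charpoly_dual_transpose (f : V →ₗ[ℝ] V) :
    LinearMap.charpoly (Module.Dual.transpose (R := ℝ) f) = f.charpoly := by
  classical
  let b := Module.finBasis ℝ V
  rw [← LinearMap.charpoly_toMatrix (Module.Dual.transpose (R := ℝ) f) b.dualBasis,
    LinearMap.toMatrix_transpose, charpoly_transpose', LinearMap.charpoly_toMatrix]

lemma charpoly_isCompl (f : V →ₗ[ℝ] V) (A H : Submodule ℝ V)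
    (hA : ∀ x ∈ A, f x ∈ A) (hH : ∀ x ∈ H, f x ∈ H) (hc : IsCompl A H) :
    f.charpoly = (f.restrict hA).charpoly * (f.restrict hH).charpoly := by
  set e := Submodule.prodEquivOfIsCompl A H hc
  have hfe : e.conj ((f.restrict hA).prodMap (f.restrict hH)) = f := by
    apply LinearMap.ext; intro x
    obtain ⟨z, rfl⟩ := e.surjective x
    rw [LinearEquiv.conj_apply_apply]
    simp only [e, Submodule.coe_prodEquivOfIsCompl', LinearMap.prodMap_apply, map_add]
    simp [LinearMap.restrict_apply]
  conv_lhs => rw [← hfe]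
  rw [charpoly_conj', LinearMap.charpoly_prodMap]

lemma charpoly_smul_id (μ : ℝ) :
    LinearMap.charpoly (μ • (LinearMap.id : V →ₗ[ℝ] V)) = (X - C μ) ^ (Module.finrank ℝ V) := by
  classical
  let b := Module.finBasis ℝ V
  rw [← LinearMap.charpoly_toMatrix (μ • (LinearMap.id : V →ₗ[ℝ] V)) b]
  have h1 : LinearMap.toMatrix b b (μ • (LinearMap.id : V →ₗ[ℝ] V)) = μ • (1 : Matrix _ _ ℝ) := by
    rw [_root_.map_smul, LinearMap.toMatrix_id]
  rw [h1]
  have h2 : Matrix.charmatrix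
        (μ • (1 : Matrix (Fin (Module.finrank ℝ V)) (Fin (Module.finrank ℝ V)) ℝ)) =
      Matrix.diagonal (fun _ => (X : ℝ[X]) - C μ) := by
    ext i j
    by_cases h : i = j <;>
      simp [Matrix.charmatrix_apply, Matrix.diagonal, h, Matrix.one_apply]
  rw [Matrix.charpoly, h2, Matrix.det_diagonal]
  simp [Finset.prod_const]

end CharpolyAux

section DualCharpoly

/-- The equivalence between the algebraic dual and the continuous dual. -/
def dualEquiv (d : ℕ) : Module.Dual ℝ (E d) ≃ₗ[ℝ] Dual' d :=
  LinearMap.toContinuousLinearMap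

lemma dualEnd_eq_conj {d : ℕ} (g : SL d) :
    dualEnd g = (dualEquiv d).conj (Module.Dual.transpose (R := ℝ) (toEnd g⁻¹)) := by
  apply LinearMap.ext; intro θ
  apply ContinuousLinearMap.ext; intro v
  simp [dualEnd, dualEquiv, toCLM, LinearEquiv.conj_apply,
    LinearMap.coe_toContinuousLinearMap', Module.Dual.transpose_apply]

lemma charpoly_dualEnd {d : ℕ} (g : SL d) :
    LinearMap.charpoly (dualEnd g) = LinearMap.charpoly (toEnd g⁻¹) := by
  rw [dualEnd_eq_conj, charpoly_conj', charpoly_dual_transpose]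

end DualCharpoly

section Geometry

open scoped RealInnerProductSpace

lemma exists_unit_near_in_ker {d : ℕ} (θ : Dual' d) (hθ : ‖θ‖ = 1) (x : E d) (hx : ‖x‖ = 1)
    (ht : |θ x| < 1) :
    ∃ y : E d, θ y = 0 ∧ ‖y‖ = 1 ∧ ‖x - y‖ ≤ 2 * |θ x| := by
  set t := θ x with htdef
  set n := (InnerProductSpace.toDual ℝ (E d)).symm θ with hndef
  have hθv : ∀ v : E d, ⟪n, v⟫ = θ v := fun v => InnerProductSpace.toDual_symm_apply
  have hn : ‖n‖ = 1 := by rw [hndef, LinearIsometryEquiv.norm_map, hθ]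
  set h := x - t • n with hhdef
  have hθh : θ h = 0 := by
    have hnn : θ n = 1 := by
      rw [← hθv n, real_inner_self_eq_norm_sq, hn]; norm_num
    simp [hhdef, map_sub, map_smul, hnn, htdef]
  have hinx : ⟪x, n⟫ = t := by rw [real_inner_comm, hθv]
  have hh2 : ‖h‖ ^ 2 = 1 - t ^ 2 := by
    rw [hhdef, norm_sub_sq_real, real_inner_smul_right, hinx, norm_smul, hx, hn,
      Real.norm_eq_abs]
    rw [mul_one, sq_abs]
    ring
  have ht2 : t ^ 2 < 1 := by
    have := abs_nonneg t
    nlinarith [sq_abs t]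
  have hhne : ‖h‖ ≠ 0 := by
    intro h0
    rw [h0] at hh2
    nlinarith
  have hhpos : 0 < ‖h‖ := lt_of_le_of_ne (norm_nonneg _) (Ne.symm hhne)
  have hhle : ‖h‖ ≤ 1 := by nlinarith [norm_nonneg h]
  refine ⟨‖h‖⁻¹ • h, by simp [map_smul, hθh], ?_, ?_⟩
  · rw [norm_smul, norm_inv, norm_norm, inv_mul_cancel₀ hhne]
  · have hxh : ⟪x, h⟫ = ‖h‖ ^ 2 := by
      rw [hhdef, inner_sub_right, real_inner_smul_right, hinx, real_inner_self_eq_norm_sq, hx, hh2]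
      ring
    have hxy : ⟪x, ‖h‖⁻¹ • h⟫ = ‖h‖ := by
      rw [real_inner_smul_right, hxh]
      field_simp
    have hy1 : ‖‖h‖⁻¹ • h‖ = 1 := by
      rw [norm_smul, norm_inv, norm_norm, inv_mul_cancel₀ hhne]
    have hsq : ‖x - ‖h‖⁻¹ • h‖ ^ 2 = 2 - 2 * ‖h‖ := by
      rw [norm_sub_sq_real, hxy, hx, hy1]; ring
    have h1h : 1 - ‖h‖ ≤ t ^ 2 := by nlinarith
    have hfin : ‖x - ‖h‖⁻¹ • h‖ ^ 2 ≤ (2 * |t|) ^ 2 := by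
      rw [hsq]
      nlinarith [sq_abs t]
    have := abs_nonneg t
    nlinarith [norm_nonneg (x - ‖h‖⁻¹ • h)]

end Geometry

set_option maxHeartbeats 2000000 in
/-- transversality of the attracting neighborhoods. -/
theorem statement1 (d r : ℕ) (hd : 2 ≤ d) (hr : 1 ≤ r) (ε : ℝ) (hε : 0 < ε)
    (γ : Fin (2 * r) → SL d) (hdist : Function.Injective γ)
    (hprox : ∀ i, IsProximal (toEnd (γ i))) (hsym : SymmFam γ)
    (hS : PrimalSchottky ε γ) (hS' : DualSchottky ε γ)
    (i j : Fin (2 * r)) (hij : i ≠ j)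
    (X : Submodule ℝ (E d)) (hX : IsLine X)
    (hXb : sdist X (attLine (toEnd (γ i))) ≤ ε)
    (Y : Submodule ℝ (Dual' d)) (hY : IsLine Y)
    (hYb : sdist Y (attLine (dualEnd (γ j))) ≤ ε) :
    X ⊔ dualKer Y = ⊤ := by
  classical
  have hε6 : (0:ℝ) < 6 * ε := by linarith
  have hSfam : IsSchottkyFam ε (fun i => toEnd (γ i)) (fun i => toEnd ((γ i)⁻¹)) := hS
  have hSfam' : IsSchottkyFam ε (fun i => dualEnd (γ i)) (fun i => dualEnd ((γ i)⁻¹)) := hS'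
  have h1 : 6 * ε ≤ sdist (attLine (toEnd (γ i))) (repHyp (toEnd ((γ j)⁻¹))) :=
    hSfam.2 i j hij
  have h2 : 6 * ε ≤ sdist (attLine (dualEnd (γ j))) (repHyp (dualEnd ((γ i)⁻¹))) :=
    hSfam'.2 j i (Ne.symm hij)
  -- witnesses from nonemptiness of the Schottky distance sets
  obtain ⟨r₁, hr₁⟩ := sdistSet_nonempty_of_pos (lt_of_lt_of_le hε6 h1)
  obtain ⟨xa, hxa, yb, hyb, hxa1, hyb1, rfl⟩ := hr₁
  have hab : 6 * ε ≤ ‖xa - yb‖ := le_trans h1 (sdist_le_norm hxa hyb hxa1 hyb1)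
  have hnorm2 : ‖xa - yb‖ ≤ 2 := by
    calc ‖xa - yb‖ ≤ ‖xa‖ + ‖yb‖ := norm_sub_le _ _
    _ = 2 := by rw [hxa1, hyb1]; norm_num
  have hε3 : ε ≤ 1/3 := by linarith
  obtain ⟨r₂, hr₂⟩ := sdistSet_nonempty_of_pos (lt_of_lt_of_le hε6 h2)
  obtain ⟨θa, hθa, _, _, hθa1, _, rfl⟩ := hr₂
  -- approximate witnesses for X and Y
  obtain ⟨xu, hxu, hxu1⟩ := exists_unit_of_isLine hX
  have hSXne : {t : ℝ | ∃ x ∈ X, ∃ y ∈ attLine (toEnd (γ i)),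
      ‖x‖ = 1 ∧ ‖y‖ = 1 ∧ t = ‖x - y‖}.Nonempty :=
    ⟨_, xu, hxu, xa, hxa, hxu1, hxa1, rfl⟩
  obtain ⟨x', hx'X, a, haA, hx'1, ha1, hxa'⟩ := exists_near_of_sdist_le hXb hSXne hε
  obtain ⟨yu, hyu, hyu1⟩ := exists_unit_of_isLine hY
  have hSYne : {t : ℝ | ∃ x ∈ Y, ∃ y ∈ attLine (dualEnd (γ j)),
      ‖x‖ = 1 ∧ ‖y‖ = 1 ∧ t = ‖x - y‖}.Nonempty :=
    ⟨_, yu, hyu, θa, hθa, hyu1, hθa1, rfl⟩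
  obtain ⟨θ', hθ'Y, θ₀, hθ₀mem, hθ'1, hθ₀1, hθθ⟩ := exists_near_of_sdist_le hYb hSYne hε
  -- the key transversality fact
  have key : θ' x' ≠ 0 := by
    intro hzero
    set f : E d →ₗ[ℝ] E d := toEnd ((γ j)⁻¹) with hfdef
    obtain ⟨k, hk⟩ := hsym j
    have hproxf : IsProximal f := by rw [hfdef, ← hk]; exact hprox k
    have hproxd : IsProximal (dualEnd (γ j)) := (hSfam'.1 j).1
    set μ : ℝ := topEig f with hμdef
    set lam : ℝ := topEig (dualEnd (γ j)) with hlamdef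
    have hμeq : μ = hproxf.choose := by
      rw [hμdef]; unfold topEig; rw [dif_pos hproxf]
    have hlameq : lam = hproxd.choose := by
      rw [hlamdef]; unfold topEig; rw [dif_pos hproxd]
    have hμspec := hproxf.choose_spec
    have hlamspec := hproxd.choose_spec
    rw [← hμeq] at hμspec
    rw [← hlameq] at hlamspec
    have hcp : LinearMap.charpoly (dualEnd (γ j)) = LinearMap.charpoly f := charpoly_dualEnd (γ j)
    rw [hcp] at hlamspec
    -- the two top eigenvalues coincide
    have hmemlam : (lam : ℂ) ∈
        (Polynomial.map (algebraMap ℝ ℂ) (LinearMap.charpoly f)).roots := by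
      apply Multiset.count_pos.1; rw [hlamspec.1]; norm_num
    have hmemmu : (μ : ℂ) ∈
        (Polynomial.map (algebraMap ℝ ℂ) (LinearMap.charpoly f)).roots := by
      apply Multiset.count_pos.1; rw [hμspec.1]; norm_num
    have hlamμ : lam = μ := by
      by_contra hne
      have hne' : (lam : ℂ) ≠ (μ : ℂ) := fun h => hne (by exact_mod_cast h)
      have h3 := hμspec.2 _ hmemlam hne'
      have h4 := hlamspec.2 _ hmemmu (Ne.symm hne')
      rw [Complex.norm_real, Real.norm_eq_abs] at h3 h4
      have := abs_nonneg lam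
      linarith
    -- the repelling hyperplane exists and is an invariant complement
    have hex : ∃ Hh : Submodule ℝ (E d), Submodule.map f Hh ≤ Hh ∧ IsCompl (attLine f) Hh := by
      by_contra hcon
      have hbot : repHyp f = ⊥ := by unfold repHyp; rw [dif_neg hcon]
      rw [hbot] at hyb
      rw [Submodule.mem_bot] at hyb
      rw [hyb] at hyb1
      simp at hyb1
    have hHeq : repHyp f = hex.choose := by unfold repHyp; rw [dif_pos hex]
    obtain ⟨hmap, hcompl⟩ := hex.choose_spec
    rw [← hHeq] at hmap hcompl
    have hmapH : ∀ v ∈ repHyp f, f v ∈ repHyp f := fun v hv =>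
      hmap (Submodule.mem_map_of_mem hv)
    have hAmem : ∀ v : E d, v ∈ attLine f ↔ f v = μ • v := by
      intro v
      simp only [attLine, LinearMap.mem_ker, LinearMap.sub_apply, LinearMap.smul_apply,
        LinearMap.id_apply, sub_eq_zero, ← hμdef]
    have hmapA : ∀ v ∈ attLine f, f v ∈ attLine f := by
      intro v hv
      rw [hAmem] at hv
      rw [hAmem, hv, map_smul, hv]
    -- θ₀ is an eigenfunctional
    have hθ₀eig : ∀ v : E d, θ₀ (f v) = lam * θ₀ v := by
      have hmain : (dualEnd (γ j)) θ₀ = lam • θ₀ := by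
        have hm := hθ₀mem
        simp only [attLine, LinearMap.mem_ker, LinearMap.sub_apply, LinearMap.smul_apply,
          LinearMap.id_apply, sub_eq_zero, ← hlamdef] at hm
        exact hm
      intro v
      have happ := congrArg (fun φ : Dual' d => φ v) hmain
      simpa [dualEnd, toCLM, LinearMap.coe_toContinuousLinearMap', ← hfdef,
        smul_eq_mul] using happ
    -- θ₀ vanishes on the repelling hyperplane
    have hres : ∀ v ∈ repHyp f, ∃ w, w ∈ repHyp f ∧ f w - μ • w = v := by
      set g : repHyp f →ₗ[ℝ] repHyp f := f.restrict hmapH - μ • LinearMap.id with hgdef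
      have hker : ∀ w : repHyp f, g w = 0 → w = 0 := by
        intro w hw
        have hcoe : f ↑w - μ • (↑w : E d) = 0 := by
          have := congrArg (Subtype.val) hw
          simpa [hgdef, LinearMap.restrict_coe_apply] using this
        have hwA : (↑w : E d) ∈ attLine f := (hAmem _).2 (sub_eq_zero.1 hcoe)
        have hw0 : (↑w : E d) = 0 :=
          Submodule.disjoint_def.1 hcompl.disjoint _ hwA w.2
        exact Subtype.ext hw0
      have hginj : Function.Injective g := by
        rw [← LinearMap.ker_eq_bot, Submodule.eq_bot_iff]
        exact fun w hw => hker w (LinearMap.mem_ker.1 hw)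
      have hgsurj := (LinearMap.injective_iff_surjective).1 hginj
      intro v hv
      obtain ⟨w, hw⟩ := hgsurj ⟨v, hv⟩
      refine ⟨↑w, w.2, ?_⟩
      have := congrArg (Subtype.val) hw
      simpa [hgdef, LinearMap.restrict_coe_apply] using this
    have hvan : ∀ v ∈ repHyp f, θ₀ v = 0 := by
      intro v hv
      obtain ⟨w, hwH, hw⟩ := hres v hv
      rw [← hw, map_sub, map_smul, hθ₀eig, hlamμ, smul_eq_mul, sub_self]
    -- the attracting line has dimension at most 1
    have hfA : f.restrict hmapA = (μ • LinearMap.id : attLine f →ₗ[ℝ] attLine f) := by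
      apply LinearMap.ext; intro w; apply Subtype.ext
      rw [LinearMap.restrict_coe_apply]
      have := (hAmem ↑w).1 w.2
      rw [this, LinearMap.smul_apply, LinearMap.id_apply, SetLike.val_smul]
    have hne1 : ((f.restrict hmapA).charpoly.map (algebraMap ℝ ℂ)) ≠ 0 :=
      ((f.restrict hmapA).charpoly_monic.map _).ne_zero
    have hne2 : ((f.restrict hmapH).charpoly.map (algebraMap ℝ ℂ)) ≠ 0 :=
      ((f.restrict hmapH).charpoly_monic.map _).ne_zero
    have hMA : ((f.restrict hmapA).charpoly.map (algebraMap ℝ ℂ)) =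
        (Polynomial.X - Polynomial.C (μ:ℂ)) ^ (Module.finrank ℝ (attLine f)) := by
      rw [hfA, charpoly_smul_id, Polynomial.map_pow, Polynomial.map_sub, Polynomial.map_X,
        Polynomial.map_C]
      norm_num
    have hA1 : Module.finrank ℝ (attLine f) ≤ 1 := by
      have hmul := charpoly_isCompl f (attLine f) (repHyp f) hmapA hmapH hcompl
      have hcount : (Polynomial.map (algebraMap ℝ ℂ) (LinearMap.charpoly f)).roots.count (μ:ℂ) =
          Module.finrank ℝ (attLine f) +
            ((f.restrict hmapH).charpoly.map (algebraMap ℝ ℂ)).roots.count (μ:ℂ) := by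
        rw [hmul, Polynomial.map_mul, Polynomial.roots_mul (mul_ne_zero hne1 hne2),
          Multiset.count_add, hMA, Polynomial.roots_pow, Polynomial.roots_X_sub_C,
          Multiset.count_nsmul, Multiset.count_singleton_self, mul_one]
      rw [hμspec.1] at hcount
      omega
    -- the repelling hyperplane is the kernel of θ₀
    have hθ₀ne : θ₀ ≠ 0 := by
      intro h0; rw [h0] at hθ₀1; simp at hθ₀1
    set θL : E d →ₗ[ℝ] ℝ := (θ₀ : E d →ₗ[ℝ] ℝ) with hθLdef
    have hkerle : repHyp f ≤ LinearMap.ker θL := by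
      intro v hv
      rw [LinearMap.mem_ker]
      have := hvan v hv
      simpa [hθLdef] using this
    have hrange : Module.finrank ℝ (LinearMap.range θL) = 1 := by
      have hle : Module.finrank ℝ (LinearMap.range θL) ≤ 1 := by
        have := Submodule.finrank_le (LinearMap.range θL)
        simpa using this
      have hne : LinearMap.range θL ≠ ⊥ := by
        intro h0
        apply hθ₀ne
        ext v
        have : θL v ∈ LinearMap.range θL := LinearMap.mem_range_self _ v
        rw [h0, Submodule.mem_bot] at this
        simpa [hθLdef] using this
      have hge : Module.finrank ℝ (LinearMap.range θL) ≠ 0 := by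
        intro h0
        exact hne (Submodule.finrank_eq_zero.1 h0)
      omega
    have hrn := LinearMap.finrank_range_add_finrank_ker θL
    rw [hrange, finrank_euclideanSpace_fin] at hrn
    have hcompl' := Submodule.finrank_add_eq_of_isCompl hcompl
    rw [finrank_euclideanSpace_fin] at hcompl'
    have hHrepker : repHyp f = LinearMap.ker θL := by
      apply Submodule.eq_of_le_of_finrank_le hkerle
      omega
    -- geometric estimate
    have htval : |θ₀ x'| < 2 * ε := by
      have heq : θ₀ x' = -((θ' - θ₀) x') := by
        simp [ContinuousLinearMap.sub_apply, hzero]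
      rw [heq, abs_neg]
      calc |(θ' - θ₀) x'| ≤ ‖θ' - θ₀‖ * ‖x'‖ := (θ' - θ₀).le_opNorm x'
        _ = ‖θ' - θ₀‖ := by rw [hx'1, mul_one]
        _ < 2 * ε := by linarith
    have hlt1 : |θ₀ x'| < 1 := by linarith
    obtain ⟨y, hyker, hy1, hxy⟩ := exists_unit_near_in_ker θ₀ hθ₀1 x' hx'1 hlt1
    have hyH : y ∈ repHyp f := by
      rw [hHrepker, LinearMap.mem_ker]
      simpa [hθLdef] using hyker
    have hfar : 6 * ε ≤ ‖a - y‖ := le_trans h1 (sdist_le_norm haA hyH ha1 hy1)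
    have htri : ‖a - y‖ ≤ ‖a - x'‖ + ‖x' - y‖ := by
      have : a - y = (a - x') + (x' - y) := by abel
      rw [this]; exact norm_add_le _ _
    have hax : ‖a - x'‖ = ‖x' - a‖ := norm_sub_rev _ _
    have habs : 0 ≤ |θ₀ x'| := abs_nonneg _
    linarith
  -- conclusion: X and the kernel of Y span everything
  have hθ'ne : θ' ≠ 0 := by
    intro h0; rw [h0] at hθ'1; simp at hθ'1
  have hYspan : Y = Submodule.span ℝ {θ'} := by
    have hle : Submodule.span ℝ {θ'} ≤ Y := by
      rw [Submodule.span_le, Set.singleton_subset_iff]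
      exact hθ'Y
    refine (Submodule.eq_of_le_of_finrank_le hle ?_).symm
    rw [hY, finrank_span_singleton hθ'ne]
  rw [eq_top_iff]
  intro v _
  have hmem : v - (θ' v / θ' x') • x' ∈ dualKer Y := by
    intro φ hφ
    rw [hYspan, Submodule.mem_span_singleton] at hφ
    obtain ⟨c, rfl⟩ := hφ
    have : θ' (v - (θ' v / θ' x') • x') = 0 := by
      rw [map_sub, map_smul, smul_eq_mul]
      field_simp
      simp
    simp only [ContinuousLinearMap.smul_apply, this, smul_eq_mul, mul_zero]
  exact Submodule.mem_sup.2 ⟨(θ' v / θ' x') • x', X.smul_mem _ hx'X,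
    v - (θ' v / θ' x') • x', hmem, by abel⟩

end Amalgam
end
end

section
/- Let d ≥ 2, C ∈ (0,1), and let S ⊂ SL_d(ℝ) be a symmetric set such that: (i) for every reduced word x₀, x₁, …, x_n in S one has ‖x₀ x₁ ⋯ x_n‖ ≥ C^{n+2} · ‖x₀‖ ⋯ ‖x_n‖, and (ii) every γ ∈ S satisfies ‖γ‖² ≥ C⁻³ · ‖C₂(γ)‖. Then every reduced word x₀, x₁, …, x_n in S satisfies ‖x₀ x₁ ⋯ x_n‖² ≥ C^{−(n−1)} · ‖C₂(x₀ x₁ ⋯ x_n)‖. In particular, for every infinite reduced word (xᵢ)_{i∈ℕ} in S, log(‖x₀ ⋯ x_n‖² / ‖C₂(x₀ ⋯ x_n)‖) → +∞ as n → ∞. -/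
open Polynomial Filter
open scoped Classical

noncomputable section

namespace Amalgam

variable {W : Type*} [NormedAddCommGroup W] [NormedSpace ℝ W]

variable [FiniteDimensional ℝ W]

section Aux

lemma cauchy_binet2 {d : ℕ} (a₁ a₂ b₁ b₂ : Fin d → ℝ) :
    (∑ x, a₁ x * b₁ x) * (∑ x, a₂ x * b₂ x) - (∑ x, a₁ x * b₂ x) * (∑ x, a₂ x * b₁ x)
      = ∑ r : {p : Fin d × Fin d // p.1 < p.2},
          (a₁ r.1.1 * a₂ r.1.2 - a₁ r.1.2 * a₂ r.1.1) *
          (b₁ r.1.1 * b₂ r.1.2 - b₂ r.1.1 * b₁ r.1.2) := by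
  classical
  set G : Fin d × Fin d → ℝ :=
    fun p => (a₁ p.1 * a₂ p.2) * (b₁ p.1 * b₂ p.2 - b₂ p.1 * b₁ p.2) with hG
  have lhs_eq : (∑ x, a₁ x * b₁ x) * (∑ x, a₂ x * b₂ x)
      - (∑ x, a₁ x * b₂ x) * (∑ x, a₂ x * b₁ x) = ∑ p : Fin d × Fin d, G p := by
    rw [Fintype.sum_prod_type, Finset.sum_mul_sum, Finset.sum_mul_sum,
      ← Finset.sum_sub_distrib]
    refine Finset.sum_congr rfl fun x _ => ?_
    rw [← Finset.sum_sub_distrib]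
    refine Finset.sum_congr rfl fun y _ => ?_
    simp only [hG]; ring
  have h0 : ∀ p : Fin d × Fin d, p.1 = p.2 → G p = 0 := by
    intro p h; simp only [hG, h]; ring
  have hsplit : ∑ p : Fin d × Fin d, G p
      = ∑ p ∈ Finset.univ.filter (fun p : Fin d × Fin d => p.1 < p.2), G p
        + ∑ p ∈ Finset.univ.filter (fun p : Fin d × Fin d => ¬ p.1 < p.2), G p :=
    (Finset.sum_filter_add_sum_filter_not _ _ _).symm
  have hsub : Finset.univ.filter (fun p : Fin d × Fin d => p.2 < p.1)
      ⊆ Finset.univ.filter (fun p : Fin d × Fin d => ¬ p.1 < p.2) := by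
    intro p hp
    simp only [Finset.mem_filter, Finset.mem_univ, true_and] at hp ⊢
    exact lt_asymm hp
  have hzero : ∑ p ∈ Finset.univ.filter (fun p : Fin d × Fin d => ¬ p.1 < p.2), G p
      = ∑ p ∈ Finset.univ.filter (fun p : Fin d × Fin d => p.2 < p.1), G p := by
    refine (Finset.sum_subset hsub fun p hp hnp => ?_).symm
    simp only [Finset.mem_filter, Finset.mem_univ, true_and] at hp hnp
    exact h0 p (le_antisymm (not_lt.1 hnp) (not_lt.1 hp))
  have hswap : ∑ p ∈ Finset.univ.filter (fun p : Fin d × Fin d => p.2 < p.1), G p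
      = ∑ p ∈ Finset.univ.filter (fun p : Fin d × Fin d => p.1 < p.2), G (p.2, p.1) := by
    refine Finset.sum_equiv (Equiv.prodComm _ _) (fun p => ?_) (fun p hp => ?_)
    · simp [Equiv.prodComm]
    · rfl
  have hsubty : ∑ r : {p : Fin d × Fin d // p.1 < p.2},
        (a₁ r.1.1 * a₂ r.1.2 - a₁ r.1.2 * a₂ r.1.1) *
        (b₁ r.1.1 * b₂ r.1.2 - b₂ r.1.1 * b₁ r.1.2)
      = ∑ p ∈ Finset.univ.filter (fun p : Fin d × Fin d => p.1 < p.2),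
          (a₁ p.1 * a₂ p.2 - a₁ p.2 * a₂ p.1) * (b₁ p.1 * b₂ p.2 - b₂ p.1 * b₁ p.2) :=
    (Finset.sum_subtype (Finset.univ.filter fun p : Fin d × Fin d => p.1 < p.2)
      (fun p => by simp)
      (fun p : Fin d × Fin d =>
        (a₁ p.1 * a₂ p.2 - a₁ p.2 * a₂ p.1) * (b₁ p.1 * b₂ p.2 - b₂ p.1 * b₁ p.2))).symm
  rw [lhs_eq, hsplit, hzero, hswap, ← Finset.sum_add_distrib, hsubty]
  refine Finset.sum_congr rfl fun p _ => ?_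
  simp only [hG]; ring

lemma compound2_mul {d : ℕ} (A B : Matrix (Fin d) (Fin d) ℝ) :
    compound2 (A * B) = compound2 A * compound2 B := by
  ext p q
  obtain ⟨⟨i, j⟩, hij⟩ := p
  obtain ⟨⟨k, l⟩, hkl⟩ := q
  simp only [compound2, Matrix.mul_apply]
  exact cauchy_binet2 (A i) (A j) (fun a => B a k) (fun a => B a l)

lemma compound2_one {d : ℕ} : compound2 (1 : Matrix (Fin d) (Fin d) ℝ) = 1 := by
  ext p q
  obtain ⟨⟨⟨i, hi⟩, ⟨j, hj⟩⟩, hij⟩ := p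
  obtain ⟨⟨⟨k, hk⟩, ⟨l, hl⟩⟩, hkl⟩ := q
  have hij' : i < j := hij
  have hkl' : k < l := hkl
  simp only [compound2, Matrix.one_apply, Subtype.mk.injEq, Prod.mk.injEq, Fin.mk.injEq]
  split_ifs <;> first | (exfalso; omega) | norm_num

lemma c2norm_nonneg {d : ℕ} (A : Matrix (Fin d) (Fin d) ℝ) : 0 ≤ c2norm A :=
  norm_nonneg _

lemma opN_nonneg {d : ℕ} (g : SL d) : 0 ≤ opN g := norm_nonneg _

lemma toCLM_comp {d : ℕ} (A B : Matrix ({p : Fin d × Fin d // p.1 < p.2})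
    ({p : Fin d × Fin d // p.1 < p.2}) ℝ) :
    LinearMap.toContinuousLinearMap (Matrix.toEuclideanLin (A * B))
      = (LinearMap.toContinuousLinearMap (Matrix.toEuclideanLin A)).comp
          (LinearMap.toContinuousLinearMap (Matrix.toEuclideanLin B)) := by
  ext x
  simp [Matrix.toEuclideanLin_eq_toLin, Matrix.toLin_mul _ (PiLp.basisFun 2 ℝ _)]

lemma c2norm_mul_le {d : ℕ} (A B : Matrix (Fin d) (Fin d) ℝ) :
    c2norm (A * B) ≤ c2norm A * c2norm B := by
  unfold c2norm
  rw [compound2_mul, toCLM_comp]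
  exact ContinuousLinearMap.opNorm_comp_le _ _

lemma c2norm_one {d : ℕ} (hd : 2 ≤ d) : c2norm (1 : Matrix (Fin d) (Fin d) ℝ) = 1 := by
  have hne : Nonempty {p : Fin d × Fin d // p.1 < p.2} :=
    ⟨⟨(⟨0, by omega⟩, ⟨1, by omega⟩), by simp [Fin.lt_def]⟩⟩
  unfold c2norm
  rw [compound2_one]
  have h1 : Matrix.toEuclideanLin (1 : Matrix ({p : Fin d × Fin d // p.1 < p.2}) _ ℝ)
      = LinearMap.id := by
    rw [Matrix.toEuclideanLin_eq_toLin, Matrix.toLin_one]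
  rw [h1]
  have h2 : LinearMap.toContinuousLinearMap
      (LinearMap.id : EuclideanSpace ℝ ({p : Fin d × Fin d // p.1 < p.2}) →ₗ[ℝ] _)
      = ContinuousLinearMap.id ℝ _ := by ext x; simp
  rw [h2]
  exact ContinuousLinearMap.norm_id

lemma c2norm_pos {d : ℕ} (hd : 2 ≤ d) (g : SL d) :
    0 < c2norm ((g : SL d) : Matrix (Fin d) (Fin d) ℝ) := by
  have hmul : ((g : SL d) : Matrix (Fin d) (Fin d) ℝ) * ((g⁻¹ : SL d) : Matrix (Fin d) (Fin d) ℝ)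
      = 1 := by
    rw [← Matrix.SpecialLinearGroup.coe_mul, mul_inv_cancel]
    simp
  have h1 := c2norm_mul_le ((g : SL d) : Matrix (Fin d) (Fin d) ℝ)
    ((g⁻¹ : SL d) : Matrix (Fin d) (Fin d) ℝ)
  rw [hmul, c2norm_one hd] at h1
  have h2 := c2norm_nonneg ((g : SL d) : Matrix (Fin d) (Fin d) ℝ)
  have h3 := c2norm_nonneg ((g⁻¹ : SL d) : Matrix (Fin d) (Fin d) ℝ)
  nlinarith

lemma c2norm_word_le {d : ℕ} (hd : 2 ≤ d) (C : ℝ) (hC0 : 0 < C) :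
    ∀ w : List (SL d),
      (∀ g ∈ w, c2norm ((g : SL d) : Matrix (Fin d) (Fin d) ℝ) ≤ C ^ 3 * opN g ^ 2) →
      c2norm ((w.prod : SL d) : Matrix (Fin d) (Fin d) ℝ)
        ≤ C ^ (3 * w.length) * ((w.map opN).prod) ^ 2 := by
  intro w
  induction w with
  | nil => simp [c2norm_one hd]
  | cons g t ih =>
    intro hmem
    have hcoe : (((g :: t).prod : SL d) : Matrix (Fin d) (Fin d) ℝ)
        = ((g : SL d) : Matrix (Fin d) (Fin d) ℝ) * ((t.prod : SL d) : Matrix (Fin d) (Fin d) ℝ) := by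
      simp
    have htail := ih (fun a ha => hmem a (List.mem_cons_of_mem g ha))
    have hhead := hmem g List.mem_cons_self
    have hPn : (0:ℝ) ≤ (t.map opN).prod :=
      List.prod_nonneg (by
        intro a ha
        obtain ⟨b, _, rfl⟩ := List.mem_map.1 ha
        exact opN_nonneg b)
    calc c2norm (((g :: t).prod : SL d) : Matrix (Fin d) (Fin d) ℝ)
        ≤ c2norm ((g : SL d) : Matrix (Fin d) (Fin d) ℝ)
            * c2norm ((t.prod : SL d) : Matrix (Fin d) (Fin d) ℝ) := by
          rw [hcoe]; exact c2norm_mul_le _ _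
      _ ≤ (C ^ 3 * opN g ^ 2) * (C ^ (3 * t.length) * ((t.map opN).prod) ^ 2) := by
          apply mul_le_mul hhead htail (c2norm_nonneg _)
          positivity
      _ = C ^ (3 * (g :: t).length) * (((g :: t).map opN).prod) ^ 2 := by
          simp only [List.length_cons, List.map_cons, List.prod_cons]
          rw [show 3 * (t.length + 1) = 3 + 3 * t.length by ring, pow_add]
          ring

end Aux

/-- the gap between the first and second singular values grows along
reduced words. -/
theorem statement14 (d : ℕ) (hd : 2 ≤ d) (C : ℝ) (hC : C ∈ Set.Ioo (0 : ℝ) 1)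
    (S : Set (SL d)) (hsym : ∀ g ∈ S, g⁻¹ ∈ S)
    (h1 : ∀ w : List (SL d), IsReducedWord S w →
      C ^ (w.length + 1) * (w.map opN).prod ≤ opN w.prod)
    (h2 : ∀ g ∈ S, C ^ (-3 : ℤ) * c2norm ((g : SL d) : Matrix (Fin d) (Fin d) ℝ) ≤ opN g ^ 2) :
    (∀ w : List (SL d), IsReducedWord S w →
      C ^ (2 - (w.length : ℤ)) * c2norm ((w.prod : SL d) : Matrix (Fin d) (Fin d) ℝ)
        ≤ opN w.prod ^ 2) ∧
    (∀ x : ℕ → SL d, IsInfReducedWord S x →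
      Tendsto (fun n => Real.log (opN (wordProd x n) ^ 2 /
        c2norm ((wordProd x n : SL d) : Matrix (Fin d) (Fin d) ℝ))) atTop atTop) := by
  obtain ⟨hC0, hC1⟩ := hC
  have hCne : C ≠ 0 := ne_of_gt hC0
  have hletter : ∀ g ∈ S, c2norm ((g : SL d) : Matrix (Fin d) (Fin d) ℝ) ≤ C ^ 3 * opN g ^ 2 := by
    intro g hg
    have h := h2 g hg
    have h3 : C ^ (-3 : ℤ) = (C ^ 3)⁻¹ := by
      rw [zpow_neg]
      norm_cast
    rw [h3, inv_mul_le_iff₀ (by positivity)] at h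
    exact h
  have part1 : ∀ w : List (SL d), IsReducedWord S w →
      C ^ (2 - (w.length : ℤ)) * c2norm ((w.prod : SL d) : Matrix (Fin d) (Fin d) ℝ)
        ≤ opN w.prod ^ 2 := by
    intro w hw
    have hprod := c2norm_word_le hd C hC0 w (fun g hg => hletter g (hw.2.1 g hg))
    have h1w := h1 w hw
    have hP0 : (0:ℝ) ≤ (w.map opN).prod :=
      List.prod_nonneg (by
        intro a ha
        obtain ⟨b, _, rfl⟩ := List.mem_map.1 ha
        exact opN_nonneg b)
    calc C ^ (2 - (w.length : ℤ)) * c2norm ((w.prod : SL d) : Matrix (Fin d) (Fin d) ℝ)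
        ≤ C ^ (2 - (w.length : ℤ)) * (C ^ (3 * w.length) * ((w.map opN).prod) ^ 2) :=
          mul_le_mul_of_nonneg_left hprod (zpow_pos hC0 _).le
      _ = (C ^ (w.length + 1) * (w.map opN).prod) ^ 2 := by
          rw [mul_pow, ← pow_mul, ← mul_assoc]
          congr 1
          rw [← zpow_natCast C (3 * w.length), ← zpow_add₀ hCne,
            ← zpow_natCast C ((w.length + 1) * 2)]
          congr 1
          push_cast
          ring
      _ ≤ opN w.prod ^ 2 := pow_le_pow_left₀ (by positivity) h1w 2
  refine ⟨part1, ?_⟩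
  intro x hx
  have hred : ∀ n : ℕ, IsReducedWord S ((List.range (n + 1)).map x) := by
    intro n
    refine ⟨by simp, ?_, ?_⟩
    · intro a ha
      obtain ⟨i, _, rfl⟩ := List.mem_map.1 ha
      exact hx.1 i
    · rw [List.Chain', List.isChain_map]
      exact (List.isChain_range_succ _ n).mpr (fun m _ => hx.2 m)
  have hpos : ∀ n : ℕ, 0 < c2norm ((wordProd x n : SL d) : Matrix (Fin d) (Fin d) ℝ) :=
    fun n => c2norm_pos hd _
  have hbound : ∀ n : ℕ, ((1:ℝ) - n) * Real.log C ≤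
      Real.log (opN (wordProd x n) ^ 2 /
        c2norm ((wordProd x n : SL d) : Matrix (Fin d) (Fin d) ℝ)) := by
    intro n
    have hw := part1 ((List.range (n + 1)).map x) (hred n)
    have hlen : ((List.range (n + 1)).map x).length = n + 1 := by simp
    rw [hlen] at hw
    have hw' : C ^ (1 - (n : ℤ)) *
        c2norm ((wordProd x n : SL d) : Matrix (Fin d) (Fin d) ℝ)
          ≤ opN (wordProd x n) ^ 2 := by
      have : (2 - ((n + 1 : ℕ) : ℤ)) = 1 - (n : ℤ) := by push_cast; ring
      rw [this] at hw
      exact hw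
    have hzp : (0:ℝ) < C ^ (1 - (n : ℤ)) := zpow_pos hC0 _
    have hle : C ^ (1 - (n : ℤ)) ≤ opN (wordProd x n) ^ 2 /
        c2norm ((wordProd x n : SL d) : Matrix (Fin d) (Fin d) ℝ) :=
      (le_div_iff₀ (hpos n)).mpr hw'
    calc ((1:ℝ) - n) * Real.log C = Real.log (C ^ (1 - (n : ℤ))) := by
          rw [Real.log_zpow]; push_cast; ring
      _ ≤ _ := Real.log_le_log hzp hle
  refine tendsto_atTop_mono hbound ?_
  have hlog : Real.log C < 0 := Real.log_neg hC0 hC1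
  have heq : (fun n : ℕ => ((1:ℝ) - n) * Real.log C)
      = fun n : ℕ => (n : ℝ) * (-Real.log C) + Real.log C := by
    funext n; ring
  rw [heq]
  exact tendsto_atTop_add_const_right _ _
    (tendsto_natCast_atTop_atTop.atTop_mul_const (by linarith))

end Amalgam
end
end
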